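/- Let τ ≥ 2 be a real number and α a real number. The formal power series (1 + α t)/(1 - τ t + t²) has all coefficients positive if and only if α ≥ -(τ + √(τ² - 4))/2. -/

import Mathlib

set_option maxHeartbeats 800000 in
/-- Let `τ ≥ 2` and `α` be real numbers.  The formal power series
`(1 + α t)/(1 - τ t + t²)` (encoded as the power series `g` satisfying
`g * (1 - τ t + t²) = 1 + α t`) has all coefficients strictly positive if and only if
`α ≥ -(τ + √(τ² - 4))/2`. -/
theorem powerSeries_pos_coeffs_iff
    (τ α : ℝ) (hτ : 2 ≤ τ) (g : PowerSeries ℝ)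
    (hg : g * (1 - PowerSeries.C τ * PowerSeries.X + PowerSeries.X ^ 2)
        = 1 + PowerSeries.C α * PowerSeries.X) :
    (∀ n : ℕ, 0 < PowerSeries.coeff n g) ↔
      -(τ + Real.sqrt (τ ^ 2 - 4)) / 2 ≤ α := by
  set s := Real.sqrt (τ ^ 2 - 4) with hs_def
  have hs0 : 0 ≤ s := Real.sqrt_nonneg _
  have hs : s ^ 2 = τ ^ 2 - 4 := Real.sq_sqrt (by nlinarith)
  set L : ℝ := (τ + s) / 2 with hL_def
  have hL1 : 1 ≤ L := by rw [hL_def]; nlinarith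
  have hL0 : 0 < L := by linarith
  have hroot : L ^ 2 - τ * L + 1 = 0 := by rw [hL_def]; nlinarith
  set a : ℕ → ℝ := fun n => PowerSeries.coeff n g with ha_def
  have hg' : g - PowerSeries.C τ * (g * PowerSeries.X) + g * PowerSeries.X ^ 2
      = 1 + PowerSeries.C α * PowerSeries.X := by rw [← hg]; ring
  have hcc : PowerSeries.constantCoeff g = 1 := by
    have := congrArg (PowerSeries.coeff 0) hg'
    simpa [PowerSeries.coeff_mul_X_pow', PowerSeries.coeff_C_mul] using this
  have h0 : a 0 = 1 := by
    simp [ha_def, PowerSeries.coeff_zero_eq_constantCoeff, hcc]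
  have h1 : a 1 = τ + α := by
    have := congrArg (PowerSeries.coeff 1) hg'
    simp [PowerSeries.coeff_succ_mul_X, PowerSeries.coeff_mul_X_pow',
      PowerSeries.coeff_C_mul, PowerSeries.coeff_one, hcc] at this
    simp only [ha_def]
    linarith
  have hrec : ∀ n : ℕ, a (n + 2) = τ * a (n + 1) - a n := by
    intro n
    have := congrArg (PowerSeries.coeff (n + 2)) hg'
    have h2 : PowerSeries.coeff (n + 2) (g * PowerSeries.X ^ 2) = a n :=
      PowerSeries.coeff_mul_X_pow g 2 n
    have h3 : PowerSeries.coeff (n + 2) (g * PowerSeries.X) = a (n + 1) :=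
      PowerSeries.coeff_succ_mul_X (n + 1) g
    simp [PowerSeries.coeff_C_mul, PowerSeries.coeff_one, h2, h3,
      PowerSeries.coeff_mul_X_pow'] at this
    simp only [ha_def] at this ⊢
    linarith
  have hstep : ∀ n : ℕ, a (n + 1) = L * a n + (τ - L) ^ n * (α + τ - L) := by
    intro n
    induction n with
    | zero => simp [h1, h0]; ring
    | succ n ih =>
      rw [hrec n, ih]
      linear_combination (- a n) * hroot
  set c : ℕ → ℝ := fun n => a n * L ^ n with hc_def
  have hc0 : c 0 = 1 := by simp [hc_def, h0]
  have hcstep : ∀ n : ℕ, c (n + 1) = L ^ 2 * c n + (α * L + 1) := by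
    intro n
    have hpow : (τ - L) ^ n * L ^ n = 1 := by
      rw [← mul_pow]
      have : (τ - L) * L = 1 := by nlinarith
      rw [this, one_pow]
    simp only [hc_def]
    rw [hstep n, pow_succ]
    linear_combination (L * (α + τ - L)) * hpow - hroot
  constructor
  · intro hpos
    by_contra hlt
    push_neg at hlt
    have hαL : α < -L := by rw [hL_def]; linarith
    set δ : ℝ := -L * (α + L) with hδ_def
    have hδ : 0 < δ := by nlinarith
    have hcpos : ∀ n, 0 < c n := fun n => mul_pos (hpos n) (pow_pos hL0 n)
    have hdec : ∀ n : ℕ, c n ≤ 1 - n * δ := by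
      intro n
      induction n with
      | zero => simp [hc0]
      | succ n ih =>
        have h1' : c n ≤ 1 := by
          have : (0:ℝ) ≤ (n:ℝ) * δ := by positivity
          linarith
        have hst := hcstep n
        have hL2 : 1 ≤ L ^ 2 := by nlinarith
        push_cast
        nlinarith [hcpos n]
    obtain ⟨n, hn⟩ := exists_nat_gt (1 / δ)
    have hgt : (1:ℝ) < n * δ := by
      rw [div_lt_iff₀ hδ] at hn
      linarith
    linarith [hcpos n, hdec n]
  · intro hα n
    have hαL : -L ≤ α := by rw [hL_def]; linarith
    have hc1 : ∀ m, 1 ≤ c m := by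
      intro m
      induction m with
      | zero => simp [hc0]
      | succ m ih =>
        have hst := hcstep m
        have key : -(L * L) ≤ α * L := by nlinarith
        nlinarith
    have hpn : 0 < L ^ n := pow_pos hL0 n
    have hcn : 1 ≤ a n * L ^ n := hc1 n
    show 0 < a n
    by_contra hne
    push_neg at hne
    nlinarith [mul_nonneg (neg_nonneg.mpr hne) hpn.le]
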